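/- Let e₁,...,e₆ ∈ ℚ⁶ be vectors with eᵢ = εᵢ − (1/6)∑ⱼεⱼ (so ∑eᵢ = 0), and let M = {eᵢ + eⱼ + e_k : 1 ≤ i < j < k ≤ 6}. Then for any 5 linearly independent vectors v₁, ..., v₅ ∈ M, the subgroup ℤ(v₁,...,v₅) equals {∑ᵢ xᵢeᵢ : xᵢ ∈ ℤ, ∑xᵢ ≡ 0 (mod 3)}. -/

import Mathlib

set_option linter.unusedVariables false

/-- The quasi-basis vectors `eᵢ = εᵢ − (1/6)∑ⱼ εⱼ` in `ℚ⁶`; they satisfy `∑ᵢ eᵢ = 0`. -/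
def e (i : Fin 6) : Fin 6 → ℚ :=
  fun j => (if j = i then 1 else 0) - 1 / 6

namespace ZspanAux

/-- indicator vector of the triple encoded by `n = 36*i + 6*j + k`. -/
def col (n : ℕ) : Fin 6 → ℤ :=
  fun m => if (m : ℕ) = n / 36 ∨ (m : ℕ) = n / 6 % 6 ∨ (m : ℕ) = n % 6 then 1 else 0

def ones : Fin 6 → ℤ := fun _ => 1

def Phi (a : Fin 6 → ℤ) : Fin 6 → ℚ := ∑ i, (a i : ℚ) • e i

def combo : List ℤ → List (Fin 6 → ℤ) → (Fin 6 → ℤ)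
  | q :: qs, u :: us => q • u + combo qs us
  | _, _ => 0

def gens : List (Fin 6 → ℤ) :=
  [fun m => if m = 0 then 1 else if m = 1 then -1 else 0,
   fun m => if m = 1 then 1 else if m = 2 then -1 else 0,
   fun m => if m = 2 then 1 else if m = 3 then -1 else 0,
   fun m => if m = 3 then 1 else if m = 4 then -1 else 0,
   fun m => if m = 4 then 3 else 0]

def T10 : List ℕ := [8, 9, 10, 11, 15, 16, 17, 22, 23, 29]

def check (s : List ℕ) (cert : List (List ℤ)) : Bool :=
  match cert with
  | [c] => decide (c.length = 6) && decide (combo c (s.map col ++ [ones]) = 0)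
      && !(decide (c.take 5 = [0, 0, 0, 0, 0]))
  | [c0, c1, c2, c3, c4] =>
    (List.zip gens [c0, c1, c2, c3, c4]).all fun gc =>
      decide (gc.2.length = 6) && decide (combo gc.2 (s.map col ++ [ones]) = gc.1)
  | _ => false
def table0 : List (List Nat × List (List Int)) := [
([8, 9, 10, 11, 15], [[-1, -1, 1, 1, 2, -1], [0, 1, 0, 0, -1, 0], [1, -1, 0, 0, 0, 0], [0, 1, -1, 0, 0, 0], [-1, -1, 2, -1, 0, 1]]),
([8, 9, 10, 11, 16], [[-1, 1, -1, 1, 2, -1], [0, 0, 1, 0, -1, 0], [1, -1, 0, 0, 0, 0], [0, 1, -1, 0, 0, 0], [-1, -1, 2, -1, 0, 1]]),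
([8, 9, 10, 11, 17], [[-1, 1, 1, -1, 2, -1], [0, 0, 0, 1, -1, 0], [1, -1, 0, 0, 0, 0], [0, 1, -1, 0, 0, 0], [-1, -1, 2, -1, 0, 1]]),
([8, 9, 10, 11, 22], [[1, -1, -1, 1, 2, -1], [-1, 1, 1, 0, -1, 0], [1, -1, 0, 0, 0, 0], [0, 1, -1, 0, 0, 0], [-1, -1, 2, -1, 0, 1]]),
([8, 9, 10, 11, 23], [[1, -1, 1, -1, 2, -1], [-1, 1, 0, 1, -1, 0], [1, -1, 0, 0, 0, 0], [0, 1, -1, 0, 0, 0], [-1, -1, 2, -1, 0, 1]]),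
([8, 9, 10, 11, 29], [[1, 1, -1, -1, 2, -1], [-1, 0, 1, 1, -1, 0], [1, -1, 0, 0, 0, 0], [0, 1, -1, 0, 0, 0], [-1, -1, 2, -1, 0, 1]]),
([8, 9, 10, 15, 16], [[0, 1, -1, -1, 1, 0]]),
([8, 9, 10, 15, 17], [[-1, 0, 1, 1, 1, -1], [0, 1, 0, -1, 0, 0], [1, -1, 0, 0, 0, 0], [0, 1, -1, 0, 0, 0], [-1, -2, 2, 1, -1, 1]]),
([8, 9, 10, 15, 22], [[1, 0, -1, -1, 1, 0]]),
([8, 9, 10, 15, 23], [[0, -1, 1, 1, 1, -1], [0, 1, 0, -1, 0, 0], [1, -1, 0, 0, 0, 0], [0, 1, -1, 0, 0, 0], [-2, -1, 2, 1, -1, 1]]),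
([8, 9, 10, 15, 29], [[0, 0, 0, 1, 1, -1], [0, 1, 0, -1, 0, 0], [1, -1, 0, 0, 0, 0], [0, 1, -1, 0, 0, 0], [-2, -2, 3, 1, -1, 1]]),
([8, 9, 10, 16, 17], [[-1, 1, 0, 1, 1, -1], [0, 0, 1, -1, 0, 0], [1, -1, 0, 0, 0, 0], [0, 1, -1, 0, 0, 0], [-1, -1, 1, 1, -1, 1]]),
([8, 9, 10, 16, 22], [[1, -1, 0, -1, 1, 0]]),
([8, 9, 10, 16, 23], [[0, 0, 0, 1, 1, -1], [0, 0, 1, -1, 0, 0], [1, -1, 0, 0, 0, 0], [0, 1, -1, 0, 0, 0], [-2, 0, 1, 1, -1, 1]]),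
([8, 9, 10, 16, 29], [[0, 1, -1, 1, 1, -1], [0, 0, 1, -1, 0, 0], [1, -1, 0, 0, 0, 0], [0, 1, -1, 0, 0, 0], [-2, -1, 2, 1, -1, 1]]),
([8, 9, 10, 17, 22], [[0, 0, 0, 1, 1, -1], [-1, 1, 1, 0, -1, 0], [1, -1, 0, 0, 0, 0], [0, 1, -1, 0, 0, 0], [0, -2, 1, -1, 1, 1]]),
([8, 9, 10, 17, 23], [[1, -1, 0, -1, 1, 0]]),
([8, 9, 10, 17, 29], [[1, 0, -1, -1, 1, 0]]),
([8, 9, 10, 22, 23], [[1, -1, 0, 1, 1, -1], [-1, 1, 1, -1, 0, 0], [1, -1, 0, 0, 0, 0], [0, 1, -1, 0, 0, 0], [-1, -1, 1, 1, -1, 1]]),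
([8, 9, 10, 22, 29], [[1, 0, -1, 1, 1, -1], [-1, 1, 1, -1, 0, 0], [1, -1, 0, 0, 0, 0], [0, 1, -1, 0, 0, 0], [-1, -2, 2, 1, -1, 1]]),
([8, 9, 10, 23, 29], [[0, 1, -1, -1, 1, 0]])]

def table1 : List (List Nat × List (List Int)) := [
([8, 9, 11, 15, 16], [[-1, 0, 1, 1, 1, -1], [0, 1, 0, -1, 0, 0], [1, -1, 0, 0, 0, 0], [0, 0, 0, 1, -1, 0], [-1, 1, -1, -2, 2, 1]]),
([8, 9, 11, 15, 17], [[0, 1, -1, -1, 1, 0]]),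
([8, 9, 11, 15, 22], [[0, -1, 1, 1, 1, -1], [0, 1, 0, -1, 0, 0], [1, -1, 0, 0, 0, 0], [-1, 1, 0, 1, -1, 0], [1, -1, -1, -2, 2, 1]]),
([8, 9, 11, 15, 23], [[1, 0, -1, -1, 1, 0]]),
([8, 9, 11, 15, 29], [[0, 0, 0, 1, 1, -1], [0, 1, 0, -1, 0, 0], [1, -1, 0, 0, 0, 0], [-1, 0, 1, 1, -1, 0], [1, 1, -3, -2, 2, 1]]),
([8, 9, 11, 16, 17], [[-1, 1, 0, 1, 1, -1], [0, 0, 1, 0, -1, 0], [1, -1, 0, 0, 0, 0], [0, 1, -1, -1, 1, 0], [-1, -1, 1, 2, -2, 1]]),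
([8, 9, 11, 16, 22], [[1, -1, 0, -1, 1, 0]]),
([8, 9, 11, 16, 23], [[0, 0, 0, 1, 1, -1], [-1, 1, 1, 0, -1, 0], [1, -1, 0, 0, 0, 0], [1, 0, -1, -1, 1, 0], [-3, 1, 1, 2, -2, 1]]),
([8, 9, 11, 16, 29], [[1, 0, -1, -1, 1, 0]]),
([8, 9, 11, 17, 22], [[0, 0, 0, 1, 1, -1], [0, 0, 1, -1, 0, 0], [1, -1, 0, 0, 0, 0], [-1, 2, -1, 1, -1, 0], [1, -3, 1, -2, 2, 1]]),
([8, 9, 11, 17, 23], [[1, -1, 0, -1, 1, 0]]),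
([8, 9, 11, 17, 29], [[0, 1, -1, 1, 1, -1], [0, 0, 1, -1, 0, 0], [1, -1, 0, 0, 0, 0], [-1, 1, 0, 1, -1, 0], [1, -1, -1, -2, 2, 1]]),
([8, 9, 11, 22, 23], [[1, -1, 0, 1, 1, -1], [-1, 1, 1, 0, -1, 0], [1, -1, 0, 0, 0, 0], [0, 1, -1, -1, 1, 0], [-1, -1, 1, 2, -2, 1]]),
([8, 9, 11, 22, 29], [[0, 1, -1, -1, 1, 0]]),
([8, 9, 11, 23, 29], [[1, 0, -1, 1, 1, -1], [-1, 1, 1, -1, 0, 0], [1, -1, 0, 0, 0, 0], [0, 0, 0, 1, -1, 0], [-1, 1, -1, -2, 2, 1]]),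
([8, 9, 15, 16, 17], [[-1, 1, 0, 1, 1, -1], [0, 1, -1, 0, 0, 0], [1, -1, 0, 0, 0, 0], [0, 0, 1, -1, 0, 0], [-1, 0, -1, 2, -1, 1]]),
([8, 9, 15, 16, 22], [[1, -1, 0, -1, 1, 0]]),
([8, 9, 15, 16, 23], [[0, 0, 0, 1, 1, -1], [0, 1, -1, 0, 0, 0], [1, -1, 0, 0, 0, 0], [0, 0, 1, -1, 0, 0], [-2, 1, -1, 2, -1, 1]]),
([8, 9, 15, 16, 29], [[0, 0, 1, 0, 1, -1], [0, 1, -1, 0, 0, 0], [1, -1, 0, 0, 0, 0], [0, 0, 1, -1, 0, 0], [-2, 1, -2, 3, -1, 1]]),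
([8, 9, 15, 17, 22], [[0, 0, 0, 1, 1, -1], [0, 1, -1, 0, 0, 0], [1, -1, 0, 0, 0, 0], [-1, 1, 1, 0, -1, 0], [1, -2, -1, -1, 2, 1]]),
([8, 9, 15, 17, 23], [[1, -1, 0, -1, 1, 0]])]

def table2 : List (List Nat × List (List Int)) := [
([8, 9, 15, 17, 29], [[0, 0, 1, 0, 1, -1], [0, 1, -1, 0, 0, 0], [1, -1, 0, 0, 0, 0], [-1, 1, 0, 1, -1, 0], [1, -2, 1, -3, 2, 1]]),
([8, 9, 15, 22, 23], [[1, -1, 0, 1, 1, -1], [0, 1, -1, 0, 0, 0], [1, -1, 0, 0, 0, 0], [-1, 1, 1, -1, 0, 0], [0, -1, -1, 2, -1, 1]]),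
([8, 9, 15, 22, 29], [[0, 0, 1, 0, 1, -1], [0, 1, -1, 0, 0, 0], [1, -1, 0, 0, 0, 0], [-1, 1, 1, -1, 0, 0], [1, -2, -2, 3, -1, 1]]),
([8, 9, 15, 23, 29], [[0, 0, 1, 0, 1, -1], [0, 1, -1, 0, 0, 0], [1, -1, 0, 0, 0, 0], [0, 0, 0, 1, -1, 0], [-2, 1, 1, -3, 2, 1]]),
([8, 9, 16, 17, 22], [[1, -1, -1, 0, 1, 0]]),
([8, 9, 16, 17, 23], [[1, -1, 0, -1, 1, 0]]),
([8, 9, 16, 17, 29], [[-1, 1, 1, 1, 0, -1], [1, 0, -1, -1, 1, 0], [1, -1, 0, 0, 0, 0], [-1, 1, 0, 1, -1, 0], [0, -1, 1, -2, 1, 1]]),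
([8, 9, 16, 22, 23], [[1, -1, -1, 1, 0, 0]]),
([8, 9, 16, 22, 29], [[1, -1, -1, 1, 0, 0]]),
([8, 9, 16, 23, 29], [[0, 0, 1, 1, 0, -1], [0, 1, -1, -1, 1, 0], [1, -1, 0, 0, 0, 0], [0, 0, 0, 1, -1, 0], [-2, 1, 1, -2, 1, 1]]),
([8, 9, 17, 22, 23], [[1, -1, -1, 0, 1, 0]]),
([8, 9, 17, 22, 29], [[0, 0, 1, 1, 0, -1], [0, 1, -1, -1, 1, 0], [1, -1, 0, 0, 0, 0], [-1, 1, 1, 0, -1, 0], [1, -2, -2, 1, 1, 1]]),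
([8, 9, 17, 23, 29], [[1, -1, -1, 1, 0, 0]]),
([8, 9, 22, 23, 29], [[1, -1, 1, 1, 0, -1], [-1, 2, -1, -1, 1, 0], [1, -1, 0, 0, 0, 0], [0, 0, 0, 1, -1, 0], [-1, 0, 1, -2, 1, 1]]),
([8, 10, 11, 15, 16], [[-1, 0, 1, 1, 1, -1], [0, 1, 0, 0, -1, 0], [1, -1, 0, -1, 1, 0], [0, 0, 0, 1, -1, 0], [-1, 1, -1, -1, 1, 1]]),
([8, 10, 11, 15, 17], [[-1, 1, 0, 1, 1, -1], [0, 0, 1, 0, -1, 0], [1, 0, -1, -1, 1, 0], [0, -1, 1, 1, -1, 0], [-1, 2, -2, -1, 1, 1]]),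
([8, 10, 11, 15, 22], [[1, -1, 0, -1, 1, 0]]),
([8, 10, 11, 15, 23], [[1, 0, -1, -1, 1, 0]]),
([8, 10, 11, 15, 29], [[0, 0, 0, 1, 1, -1], [-1, 1, 1, 0, -1, 0], [2, -1, -1, -1, 1, 0], [-1, 0, 1, 1, -1, 0], [0, 1, -2, -1, 1, 1]]),
([8, 10, 11, 16, 17], [[0, 1, -1, -1, 1, 0]]),
([8, 10, 11, 16, 22], [[0, -1, 1, 1, 1, -1], [0, 1, 0, -1, 0, 0], [0, 0, 0, 1, -1, 0], [1, -1, 0, -1, 1, 0], [-2, 2, -1, 1, -1, 1]])]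

def table3 : List (List Nat × List (List Int)) := [
([8, 10, 11, 16, 23], [[0, 0, 0, 1, 1, -1], [0, 1, 0, -1, 0, 0], [0, -1, 1, 1, -1, 0], [1, 0, -1, -1, 1, 0], [-2, 1, 0, 1, -1, 1]]),
([8, 10, 11, 16, 29], [[1, 0, -1, -1, 1, 0]]),
([8, 10, 11, 17, 22], [[0, 0, 0, 1, 1, -1], [0, 0, 1, -1, 0, 0], [0, 1, -1, 1, -1, 0], [1, -2, 1, -1, 1, 0], [-2, 3, -2, 1, -1, 1]]),
([8, 10, 11, 17, 23], [[0, 1, -1, 1, 1, -1], [0, 0, 1, -1, 0, 0], [0, 0, 0, 1, -1, 0], [1, -1, 0, -1, 1, 0], [-2, 2, -1, 1, -1, 1]]),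
([8, 10, 11, 17, 29], [[1, -1, 0, -1, 1, 0]]),
([8, 10, 11, 22, 23], [[0, 1, -1, -1, 1, 0]]),
([8, 10, 11, 22, 29], [[1, -1, 0, 1, 1, -1], [-1, 1, 1, 0, -1, 0], [1, 0, -1, -1, 1, 0], [0, -1, 1, 1, -1, 0], [-1, 2, -2, -1, 1, 1]]),
([8, 10, 11, 23, 29], [[1, 0, -1, 1, 1, -1], [-1, 1, 1, 0, -1, 0], [1, -1, 0, -1, 1, 0], [0, 0, 0, 1, -1, 0], [-1, 1, -1, -1, 1, 1]]),
([8, 10, 15, 16, 17], [[-1, 1, 1, 0, 1, -1], [0, 1, 0, -1, 0, 0], [1, -1, -1, 1, 0, 0], [0, 0, 1, -1, 0, 0], [-1, 0, -1, 2, -1, 1]]),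
([8, 10, 15, 16, 22], [[1, -1, -1, 0, 1, 0]]),
([8, 10, 15, 16, 23], [[0, 0, 0, 1, 1, -1], [0, 1, 0, -1, 0, 0], [1, -1, -1, 1, 0, 0], [0, 0, 1, -1, 0, 0], [-2, 1, 0, 1, -1, 1]]),
([8, 10, 15, 16, 29], [[0, 0, 1, 0, 1, -1], [0, 1, 0, -1, 0, 0], [1, -1, -1, 1, 0, 0], [0, 0, 1, -1, 0, 0], [-2, 1, -1, 2, -1, 1]]),
([8, 10, 15, 17, 22], [[1, -1, -1, 0, 1, 0]]),
([8, 10, 15, 17, 23], [[-1, 1, 1, 1, 0, -1], [1, 0, -1, -1, 1, 0], [0, 0, 0, 1, -1, 0], [1, -1, 0, -1, 1, 0], [-3, 2, 1, 1, -2, 1]]),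
([8, 10, 15, 17, 29], [[1, -1, 0, -1, 1, 0]]),
([8, 10, 15, 22, 23], [[1, -1, -1, 1, 0, 0]]),
([8, 10, 15, 22, 29], [[1, -1, -1, 1, 0, 0]]),
([8, 10, 15, 23, 29], [[0, 0, 1, 0, 1, -1], [0, 1, -1, 1, -1, 0], [1, -1, 0, -1, 1, 0], [0, 0, 0, 1, -1, 0], [-2, 1, 1, -2, 1, 1]]),
([8, 10, 16, 17, 22], [[0, 0, 0, 1, 1, -1], [0, 1, -1, 0, 0, 0], [0, 0, 1, 0, -1, 0], [1, -1, -1, 0, 1, 0], [-2, 1, 2, -1, -1, 1]]),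
([8, 10, 16, 17, 23], [[0, 0, 1, 0, 1, -1], [0, 1, -1, 0, 0, 0], [0, 0, 0, 1, -1, 0], [1, -1, 0, -1, 1, 0], [-2, 1, 1, 0, -1, 1]]),
([8, 10, 16, 17, 29], [[1, -1, 0, -1, 1, 0]])]

def table4 : List (List Nat × List (List Int)) := [
([8, 10, 16, 22, 23], [[0, 0, 1, 0, 1, -1], [0, 1, -1, 0, 0, 0], [0, 0, 1, -1, 0, 0], [1, -1, -1, 1, 0, 0], [-2, 1, 1, 0, -1, 1]]),
([8, 10, 16, 22, 29], [[1, -1, 0, 1, 1, -1], [0, 1, -1, 0, 0, 0], [0, 0, 1, -1, 0, 0], [1, -1, -1, 1, 0, 0], [-3, 2, 2, -1, -1, 1]]),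
([8, 10, 16, 23, 29], [[0, 0, 1, 1, 0, -1], [0, 1, -1, 0, 0, 0], [1, -1, 0, -1, 1, 0], [0, 0, 0, 1, -1, 0], [-2, 1, 1, -1, 0, 1]]),
([8, 10, 17, 22, 23], [[0, 0, 1, 1, 0, -1], [0, 1, -1, -1, 1, 0], [0, 0, 1, 0, -1, 0], [1, -1, -1, 0, 1, 0], [-2, 1, 1, 1, -2, 1]]),
([8, 10, 17, 22, 29], [[1, -1, -1, 0, 1, 0]]),
([8, 10, 17, 23, 29], [[1, -1, -1, 0, 1, 0]]),
([8, 10, 22, 23, 29], [[1, -1, 1, 0, 1, -1], [-1, 2, -1, 1, -1, 0], [1, -1, 0, -1, 1, 0], [0, 0, 0, 1, -1, 0], [-1, 0, 1, -2, 1, 1]]),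
([8, 11, 15, 16, 17], [[-1, 1, 1, 1, 0, -1], [0, 1, 0, 0, -1, 0], [1, -1, -1, 0, 1, 0], [0, 0, 1, -1, 0, 0], [-1, 0, -1, 2, -1, 1]]),
([8, 11, 15, 16, 22], [[-1, 1, 1, 1, 0, -1], [1, 0, -1, -1, 1, 0], [0, 0, 0, 1, -1, 0], [0, 0, 1, -1, 0, 0], [0, -1, -2, 1, 1, 1]]),
([8, 11, 15, 16, 23], [[1, -1, -1, 0, 1, 0]]),
([8, 11, 15, 16, 29], [[1, -1, 0, -1, 1, 0]]),
([8, 11, 15, 17, 22], [[0, 0, 0, 1, 1, -1], [0, 1, 0, -1, 0, 0], [1, -1, -1, 1, 0, 0], [-1, 1, 2, -1, -1, 0], [1, -2, -3, 1, 2, 1]]),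
([8, 11, 15, 17, 23], [[1, -1, -1, 0, 1, 0]]),
([8, 11, 15, 17, 29], [[0, 0, 1, 0, 1, -1], [0, 1, 0, -1, 0, 0], [1, -1, -1, 1, 0, 0], [-1, 1, 1, 0, -1, 0], [1, -2, -1, -1, 2, 1]]),
([8, 11, 15, 22, 23], [[1, -1, -1, 0, 1, 0]]),
([8, 11, 15, 22, 29], [[0, 0, 1, 0, 1, -1], [0, 1, -1, 1, -1, 0], [1, -1, 0, -1, 1, 0], [-1, 1, 1, 0, -1, 0], [1, -2, -2, 1, 1, 1]]),
([8, 11, 15, 23, 29], [[1, -1, -1, 1, 0, 0]]),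
([8, 11, 16, 17, 22], [[0, 0, 0, 1, 1, -1], [0, 1, 0, -1, 0, 0], [0, 0, 1, 0, -1, 0], [1, -1, -2, 1, 1, 0], [-2, 1, 3, -2, -1, 1]]),
([8, 11, 16, 17, 23], [[0, 0, 1, 0, 1, -1], [0, 1, 0, -1, 0, 0], [0, 0, 0, 1, -1, 0], [1, -1, -1, 0, 1, 0], [-2, 1, 2, -1, -1, 1]]),
([8, 11, 16, 17, 29], [[1, -1, -1, 0, 1, 0]]),
([8, 11, 16, 22, 23], [[0, 0, 1, 0, 1, -1], [0, 1, -1, 1, -1, 0], [0, 0, 1, -1, 0, 0], [1, -1, -1, 0, 1, 0], [-2, 1, 1, 1, -2, 1]])]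

def table5 : List (List Nat × List (List Int)) := [
([8, 11, 16, 22, 29], [[1, -1, -1, 0, 1, 0]]),
([8, 11, 16, 23, 29], [[1, -1, -1, 0, 1, 0]]),
([8, 11, 17, 22, 23], [[0, 0, 1, 1, 0, -1], [0, 1, -1, 0, 0, 0], [0, 0, 1, 0, -1, 0], [1, -1, -1, -1, 2, 0], [-2, 1, 1, 2, -3, 1]]),
([8, 11, 17, 22, 29], [[0, 0, 1, 1, 0, -1], [0, 1, -1, 0, 0, 0], [1, -1, 0, -1, 1, 0], [-1, 1, 1, 1, -2, 0], [1, -2, -2, -1, 3, 1]]),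
([8, 11, 17, 23, 29], [[1, -1, 0, 1, 1, -1], [0, 1, -1, 0, 0, 0], [0, 0, 1, -1, 0, 0], [0, 0, 0, 1, -1, 0], [0, -1, -1, -1, 2, 1]]),
([8, 11, 22, 23, 29], [[1, -1, 0, 1, 1, -1], [-1, 2, 1, -1, -1, 0], [1, -1, -1, 0, 1, 0], [0, 0, 0, 1, -1, 0], [-1, 0, 1, -2, 1, 1]]),
([8, 15, 16, 17, 22], [[0, 0, 0, 1, 1, -1], [1, -1, -1, 0, 1, 0], [0, 0, 1, 0, -1, 0], [0, 1, -1, 0, 0, 0], [-1, -1, 2, -1, 0, 1]]),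
([8, 15, 16, 17, 23], [[0, 0, 1, 0, 1, -1], [1, -1, 0, -1, 1, 0], [0, 0, 0, 1, -1, 0], [0, 1, -1, 0, 0, 0], [-1, -1, 2, -1, 0, 1]]),
([8, 15, 16, 17, 29], [[0, 1, 0, 0, 1, -1], [1, 0, -1, -1, 1, 0], [0, -1, 1, 1, -1, 0], [0, 1, -1, 0, 0, 0], [-1, -1, 2, -1, 0, 1]]),
([8, 15, 16, 22, 23], [[0, 0, 1, 0, 1, -1], [1, -1, -1, 1, 0, 0], [0, 0, 1, -1, 0, 0], [0, 1, -1, 0, 0, 0], [-1, -1, 1, 1, -1, 1]]),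
([8, 15, 16, 22, 29], [[0, 1, 0, 0, 1, -1], [1, -1, -1, 1, 0, 0], [0, 0, 1, -1, 0, 0], [0, 1, -1, 0, 0, 0], [-1, -2, 2, 1, -1, 1]]),
([8, 15, 16, 23, 29], [[0, 1, -1, -1, 1, 0]]),
([8, 15, 17, 22, 23], [[0, 0, 1, 1, 0, -1], [1, -1, -1, 0, 1, 0], [0, 0, 1, 0, -1, 0], [0, 1, -1, -1, 1, 0], [-1, -1, 1, 2, -2, 1]]),
([8, 15, 17, 22, 29], [[0, 1, -1, -1, 1, 0]]),
([8, 15, 17, 23, 29], [[0, 1, 0, 0, 1, -1], [1, -1, -1, 1, 0, 0], [0, 0, 1, -1, 0, 0], [0, 0, 0, 1, -1, 0], [-1, 1, -1, -2, 2, 1]]),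
([8, 15, 22, 23, 29], [[0, 1, 0, 0, 1, -1], [1, -2, 1, 1, -1, 0], [0, 1, -1, -1, 1, 0], [0, 0, 0, 1, -1, 0], [-1, 0, 1, -2, 1, 1]]),
([8, 16, 17, 22, 23], [[0, 1, -1, -1, 1, 0]]),
([8, 16, 17, 22, 29], [[0, 0, 1, 1, 0, -1], [1, -1, -1, 0, 1, 0], [0, 1, 0, -1, 0, 0], [0, -1, 1, 1, -1, 0], [-1, 2, -2, -1, 1, 1]]),
([8, 16, 17, 23, 29], [[0, 1, 0, 1, 0, -1], [1, -1, -1, 0, 1, 0], [0, 0, 1, -1, 0, 0], [0, 0, 0, 1, -1, 0], [-1, 1, -1, -1, 1, 1]]),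
([8, 16, 22, 23, 29], [[0, 1, 0, 1, 0, -1], [1, -2, 1, -1, 1, 0], [0, 1, -1, 0, 0, 0], [0, 0, 0, 1, -1, 0], [-1, 0, 1, -2, 1, 1]]),
([8, 17, 22, 23, 29], [[0, 1, 1, 0, 0, -1], [1, -2, -1, 1, 1, 0], [0, 1, 0, -1, 0, 0], [0, 0, 0, 1, -1, 0], [-1, 0, 1, -2, 1, 1]])]

def table6 : List (List Nat × List (List Int)) := [
([9, 10, 11, 15, 16], [[1, -1, 0, -1, 1, 0]]),
([9, 10, 11, 15, 17], [[1, 0, -1, -1, 1, 0]]),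
([9, 10, 11, 15, 22], [[-1, 0, 1, 1, 1, -1], [1, 0, 0, -1, 0, 0], [-1, 1, 0, 1, -1, 0], [1, -1, 0, 0, 0, 0], [-1, 1, -1, -1, 1, 1]]),
([9, 10, 11, 15, 23], [[-1, 1, 0, 1, 1, -1], [1, 0, 0, -1, 0, 0], [-1, 0, 1, 1, -1, 0], [1, -1, 0, 0, 0, 0], [-1, 2, -2, -1, 1, 1]]),
([9, 10, 11, 15, 29], [[0, 0, 0, 1, 1, -1], [1, 0, 0, -1, 0, 0], [-2, 1, 1, 1, -1, 0], [1, -1, 0, 0, 0, 0], [0, 1, -2, -1, 1, 1]]),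
([9, 10, 11, 16, 17], [[0, 1, -1, -1, 1, 0]]),
([9, 10, 11, 16, 22], [[0, -1, 1, 1, 1, -1], [0, 1, 0, -1, 0, 0], [0, 0, 0, 1, -1, 0], [1, -1, 0, 0, 0, 0], [-2, 2, -1, -1, 1, 1]]),
([9, 10, 11, 16, 23], [[0, 0, 0, 1, 1, -1], [0, 1, 0, -1, 0, 0], [0, -1, 1, 1, -1, 0], [1, -1, 0, 0, 0, 0], [-2, 3, -2, -1, 1, 1]]),
([9, 10, 11, 16, 29], [[1, -1, 0, 1, 1, -1], [0, 1, 0, -1, 0, 0], [-1, 0, 1, 1, -1, 0], [1, -1, 0, 0, 0, 0], [-1, 2, -2, -1, 1, 1]]),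
([9, 10, 11, 17, 22], [[0, 0, 0, 1, 1, -1], [0, 0, 1, -1, 0, 0], [0, 1, -1, 1, -1, 0], [1, -1, 0, 0, 0, 0], [-2, 1, 0, -1, 1, 1]]),
([9, 10, 11, 17, 23], [[0, 1, -1, 1, 1, -1], [0, 0, 1, -1, 0, 0], [0, 0, 0, 1, -1, 0], [1, -1, 0, 0, 0, 0], [-2, 2, -1, -1, 1, 1]]),
([9, 10, 11, 17, 29], [[1, 0, -1, 1, 1, -1], [0, 0, 1, -1, 0, 0], [-1, 1, 0, 1, -1, 0], [1, -1, 0, 0, 0, 0], [-1, 1, -1, -1, 1, 1]]),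
([9, 10, 11, 22, 23], [[0, 1, -1, -1, 1, 0]]),
([9, 10, 11, 22, 29], [[1, 0, -1, -1, 1, 0]]),
([9, 10, 11, 23, 29], [[1, -1, 0, -1, 1, 0]]),
([9, 10, 15, 16, 17], [[1, -1, -1, 1, 0, 0]]),
([9, 10, 15, 16, 22], [[1, -1, -1, 1, 0, 0]]),
([9, 10, 15, 16, 23], [[1, -1, -1, 1, 0, 0]]),
([9, 10, 15, 16, 29], [[1, -1, -1, 1, 0, 0]]),
([9, 10, 15, 17, 22], [[0, 0, 0, 1, 1, -1], [1, 0, -1, 0, 0, 0], [-1, 1, 1, 0, -1, 0], [1, -1, 0, 0, 0, 0], [-2, 1, 0, -1, 1, 1]]),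
([9, 10, 15, 17, 23], [[-1, 1, 1, 0, 1, -1], [1, 0, -1, 0, 0, 0], [0, 0, 0, 1, -1, 0], [1, -1, 0, 0, 0, 0], [-3, 2, 1, -2, 1, 1]])]

def table7 : List (List Nat × List (List Int)) := [
([9, 10, 15, 17, 29], [[0, 0, 1, 0, 1, -1], [1, 0, -1, 0, 0, 0], [-1, 1, 0, 1, -1, 0], [1, -1, 0, 0, 0, 0], [-2, 1, 1, -2, 1, 1]]),
([9, 10, 15, 22, 23], [[-1, 1, 1, 0, 1, -1], [1, 0, -1, 0, 0, 0], [-1, 1, 1, -1, 0, 0], [1, -1, 0, 0, 0, 0], [-1, 0, -1, 2, -1, 1]]),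
([9, 10, 15, 22, 29], [[0, 0, 1, 0, 1, -1], [1, 0, -1, 0, 0, 0], [-1, 1, 1, -1, 0, 0], [1, -1, 0, 0, 0, 0], [-2, 1, -1, 2, -1, 1]]),
([9, 10, 15, 23, 29], [[1, -1, 0, -1, 1, 0]]),
([9, 10, 16, 17, 22], [[0, 0, 0, 1, 1, -1], [0, 1, -1, 0, 0, 0], [0, 0, 1, 0, -1, 0], [1, -1, 0, 0, 0, 0], [-2, 1, 0, -1, 1, 1]]),
([9, 10, 16, 17, 23], [[0, 0, 1, 0, 1, -1], [0, 1, -1, 0, 0, 0], [0, 0, 0, 1, -1, 0], [1, -1, 0, 0, 0, 0], [-2, 1, 1, -2, 1, 1]]),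
([9, 10, 16, 17, 29], [[1, -1, 1, 0, 1, -1], [0, 1, -1, 0, 0, 0], [-1, 1, 0, 1, -1, 0], [1, -1, 0, 0, 0, 0], [-1, 0, 1, -2, 1, 1]]),
([9, 10, 16, 22, 23], [[0, 0, 1, 0, 1, -1], [0, 1, -1, 0, 0, 0], [0, 0, 1, -1, 0, 0], [1, -1, 0, 0, 0, 0], [-2, 1, -1, 2, -1, 1]]),
([9, 10, 16, 22, 29], [[1, -1, 1, 0, 1, -1], [0, 1, -1, 0, 0, 0], [0, 0, 1, -1, 0, 0], [1, -1, 0, 0, 0, 0], [-3, 2, -1, 2, -1, 1]]),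
([9, 10, 16, 23, 29], [[1, -1, 0, -1, 1, 0]]),
([9, 10, 17, 22, 23], [[0, 0, 1, 1, 0, -1], [0, 1, -1, -1, 1, 0], [0, 0, 1, 0, -1, 0], [1, -1, 0, 0, 0, 0], [-2, 1, -1, 1, 0, 1]]),
([9, 10, 17, 22, 29], [[0, 0, 1, 1, 0, -1], [1, 0, -1, -1, 1, 0], [-1, 1, 1, 0, -1, 0], [1, -1, 0, 0, 0, 0], [-2, 1, -1, 1, 0, 1]]),
([9, 10, 17, 23, 29], [[1, -1, 0, -1, 1, 0]]),
([9, 10, 22, 23, 29], [[1, -1, 0, -1, 1, 0]]),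
([9, 11, 15, 16, 17], [[1, -1, -1, 0, 1, 0]]),
([9, 11, 15, 16, 22], [[-1, 1, 1, 0, 1, -1], [1, 0, -1, 0, 0, 0], [0, 0, 0, 1, -1, 0], [0, 0, 1, -1, 0, 0], [0, -1, -2, 1, 1, 1]]),
([9, 11, 15, 16, 23], [[0, 0, 0, 1, 1, -1], [1, 0, -1, 0, 0, 0], [-1, 1, 1, 0, -1, 0], [0, 0, 1, -1, 0, 0], [1, -2, -3, 2, 1, 1]]),
([9, 11, 15, 16, 29], [[0, 0, 1, 0, 1, -1], [1, 0, -1, 0, 0, 0], [-1, 1, 0, 1, -1, 0], [0, 0, 1, -1, 0, 0], [1, -2, -2, 1, 1, 1]]),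
([9, 11, 15, 17, 22], [[1, -1, -1, 1, 0, 0]]),
([9, 11, 15, 17, 23], [[1, -1, -1, 1, 0, 0]]),
([9, 11, 15, 17, 29], [[1, -1, -1, 1, 0, 0]])]

def table8 : List (List Nat × List (List Int)) := [
([9, 11, 15, 22, 23], [[-1, 1, 1, 1, 0, -1], [1, 0, -1, 0, 0, 0], [-1, 1, 1, 0, -1, 0], [1, -1, 0, -1, 1, 0], [-1, 0, -1, 2, -1, 1]]),
([9, 11, 15, 22, 29], [[1, -1, 0, -1, 1, 0]]),
([9, 11, 15, 23, 29], [[0, 0, 1, 0, 1, -1], [1, 0, -1, 0, 0, 0], [-1, 1, 1, -1, 0, 0], [0, 0, 0, 1, -1, 0], [1, -2, -1, -1, 2, 1]]),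
([9, 11, 16, 17, 22], [[0, 0, 0, 1, 1, -1], [0, 1, 0, -1, 0, 0], [0, 0, 1, 0, -1, 0], [1, -1, -1, 1, 0, 0], [-2, 1, 1, -2, 1, 1]]),
([9, 11, 16, 17, 23], [[0, 0, 1, 0, 1, -1], [0, 1, 0, -1, 0, 0], [0, 0, 0, 1, -1, 0], [1, -1, -1, 1, 0, 0], [-2, 1, 2, -3, 1, 1]]),
([9, 11, 16, 17, 29], [[1, -1, 0, 1, 1, -1], [0, 1, 0, -1, 0, 0], [-1, 1, 1, 0, -1, 0], [1, -1, -1, 1, 0, 0], [-1, 0, 1, -2, 1, 1]]),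
([9, 11, 16, 22, 23], [[0, 0, 1, 0, 1, -1], [0, 1, -1, 1, -1, 0], [0, 0, 1, -1, 0, 0], [1, -1, 0, -1, 1, 0], [-2, 1, -1, 3, -2, 1]]),
([9, 11, 16, 22, 29], [[1, -1, 0, -1, 1, 0]]),
([9, 11, 16, 23, 29], [[0, 0, 1, 1, 0, -1], [1, 0, -1, -1, 1, 0], [-1, 1, 1, 0, -1, 0], [0, 0, 0, 1, -1, 0], [1, -2, -1, -2, 3, 1]]),
([9, 11, 17, 22, 23], [[0, 0, 1, 1, 0, -1], [0, 1, -1, 0, 0, 0], [0, 0, 1, 0, -1, 0], [1, -1, 0, -1, 1, 0], [-2, 1, -1, 2, -1, 1]]),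
([9, 11, 17, 22, 29], [[1, -1, 0, -1, 1, 0]]),
([9, 11, 17, 23, 29], [[1, -1, 1, 0, 1, -1], [0, 1, -1, 0, 0, 0], [0, 0, 1, -1, 0, 0], [0, 0, 0, 1, -1, 0], [0, -1, -1, -1, 2, 1]]),
([9, 11, 22, 23, 29], [[1, -1, -1, 0, 1, 0]]),
([9, 15, 16, 17, 22], [[0, 0, 0, 1, 1, -1], [1, -1, 0, 0, 0, 0], [0, 0, 1, 0, -1, 0], [0, 1, -1, 0, 0, 0], [-1, -1, 1, -1, 1, 1]]),
([9, 15, 16, 17, 23], [[0, 0, 1, 0, 1, -1], [1, -1, 0, 0, 0, 0], [0, 0, 0, 1, -1, 0], [0, 1, -1, 0, 0, 0], [-1, -1, 2, -2, 1, 1]]),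
([9, 15, 16, 17, 29], [[0, 1, 0, 0, 1, -1], [1, -1, 0, 0, 0, 0], [0, -1, 1, 1, -1, 0], [0, 1, -1, 0, 0, 0], [-1, 0, 1, -2, 1, 1]]),
([9, 15, 16, 22, 23], [[0, 0, 1, 0, 1, -1], [1, -1, 0, 0, 0, 0], [0, 0, 1, -1, 0, 0], [0, 1, -1, 0, 0, 0], [-1, -1, 0, 2, -1, 1]]),
([9, 15, 16, 22, 29], [[0, 1, 0, 0, 1, -1], [1, -1, 0, 0, 0, 0], [0, 0, 1, -1, 0, 0], [0, 1, -1, 0, 0, 0], [-1, -2, 1, 2, -1, 1]]),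
([9, 15, 16, 23, 29], [[0, 1, -1, -1, 1, 0]]),
([9, 15, 17, 22, 23], [[0, 0, 1, 1, 0, -1], [1, -1, 0, 0, 0, 0], [0, 0, 1, 0, -1, 0], [0, 1, -1, -1, 1, 0], [-1, -1, 0, 2, -1, 1]]),
([9, 15, 17, 22, 29], [[0, 1, -1, -1, 1, 0]])]

def table9 : List (List Nat × List (List Int)) := [
([9, 15, 17, 23, 29], [[0, 1, 0, 0, 1, -1], [1, -1, 0, 0, 0, 0], [0, 0, 1, -1, 0, 0], [0, 0, 0, 1, -1, 0], [-1, 1, -2, -1, 2, 1]]),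
([9, 15, 22, 23, 29], [[0, 1, 0, 0, 1, -1], [1, -1, 0, 0, 0, 0], [0, 1, -1, -1, 1, 0], [0, 0, 0, 1, -1, 0], [-1, -1, 2, -1, 0, 1]]),
([9, 16, 17, 22, 23], [[0, 1, -1, -1, 1, 0]]),
([9, 16, 17, 22, 29], [[0, 0, 1, 1, 0, -1], [1, 0, -1, -1, 1, 0], [0, 1, 0, -1, 0, 0], [0, -1, 1, 1, -1, 0], [-1, 1, -2, 0, 1, 1]]),
([9, 16, 17, 23, 29], [[0, 1, 0, 1, 0, -1], [1, -1, 0, -1, 1, 0], [0, 0, 1, -1, 0, 0], [0, 0, 0, 1, -1, 0], [-1, 1, -2, 0, 1, 1]]),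
([9, 16, 22, 23, 29], [[0, 1, 0, 1, 0, -1], [1, -1, 0, -1, 1, 0], [0, 1, -1, 0, 0, 0], [0, 0, 0, 1, -1, 0], [-1, -1, 2, -2, 1, 1]]),
([9, 17, 22, 23, 29], [[0, 1, 1, 0, 0, -1], [1, -1, -1, 0, 1, 0], [0, 1, 0, -1, 0, 0], [0, 0, 0, 1, -1, 0], [-1, -1, 1, -1, 1, 1]]),
([10, 11, 15, 16, 17], [[1, -1, 0, -1, 1, 0]]),
([10, 11, 15, 16, 22], [[-1, 1, 0, 1, 1, -1], [1, 0, 0, -1, 0, 0], [0, 0, 0, 1, -1, 0], [0, 0, 1, -1, 0, 0], [0, -1, -2, 1, 1, 1]]),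
([10, 11, 15, 16, 23], [[0, 0, 0, 1, 1, -1], [1, 0, 0, -1, 0, 0], [-1, 1, 0, 1, -1, 0], [0, 0, 1, -1, 0, 0], [1, -2, -2, 1, 1, 1]]),
([10, 11, 15, 16, 29], [[0, 0, 1, 0, 1, -1], [1, 0, 0, -1, 0, 0], [-1, 1, -1, 2, -1, 0], [0, 0, 1, -1, 0, 0], [1, -2, -1, 0, 1, 1]]),
([10, 11, 15, 17, 22], [[0, 0, 0, 1, 1, -1], [0, 1, 0, -1, 0, 0], [1, -1, 0, 1, -1, 0], [-1, 1, 1, -1, 0, 0], [1, -2, -2, 1, 1, 1]]),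
([10, 11, 15, 17, 23], [[1, -1, 0, 1, 1, -1], [0, 1, 0, -1, 0, 0], [0, 0, 0, 1, -1, 0], [-1, 1, 1, -1, 0, 0], [2, -3, -2, 1, 1, 1]]),
([10, 11, 15, 17, 29], [[0, 0, 1, 0, 1, -1], [0, 1, 0, -1, 0, 0], [1, -1, -1, 2, -1, 0], [-1, 1, 1, -1, 0, 0], [1, -2, -1, 0, 1, 1]]),
([10, 11, 15, 22, 23], [[1, -1, 0, -1, 1, 0]]),
([10, 11, 15, 22, 29], [[0, 0, 1, 0, 1, -1], [0, 1, -1, 1, -1, 0], [1, -1, 1, -2, 1, 0], [-1, 1, 0, 1, -1, 0], [1, -2, -1, 0, 1, 1]]),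
([10, 11, 15, 23, 29], [[0, 0, 1, 0, 1, -1], [1, 0, -1, 1, -1, 0], [-1, 1, 1, -2, 1, 0], [0, 0, 0, 1, -1, 0], [1, -2, -1, 0, 1, 1]]),
([10, 11, 16, 17, 22], [[1, -1, -1, 1, 0, 0]]),
([10, 11, 16, 17, 23], [[1, -1, -1, 1, 0, 0]]),
([10, 11, 16, 17, 29], [[1, -1, -1, 1, 0, 0]]),
([10, 11, 16, 22, 23], [[1, -1, 0, -1, 1, 0]])]

def table10 : List (List Nat × List (List Int)) := [
([10, 11, 16, 22, 29], [[-1, 1, 1, 1, 0, -1], [1, 0, -1, 0, 0, 0], [0, 0, 1, -1, 0, 0], [-1, 1, 0, 1, -1, 0], [2, -3, -1, -1, 2, 1]]),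
([10, 11, 16, 23, 29], [[0, 0, 1, 1, 0, -1], [1, 0, -1, 0, 0, 0], [-1, 1, 1, -1, 0, 0], [0, 0, 0, 1, -1, 0], [1, -2, -1, -1, 2, 1]]),
([10, 11, 17, 22, 23], [[1, -1, 0, -1, 1, 0]]),
([10, 11, 17, 22, 29], [[0, 0, 1, 1, 0, -1], [0, 1, -1, 0, 0, 0], [1, -1, 1, -1, 0, 0], [-1, 1, 0, 1, -1, 0], [1, -2, -1, -1, 2, 1]]),
([10, 11, 17, 23, 29], [[1, -1, 1, 1, 0, -1], [0, 1, -1, 0, 0, 0], [0, 0, 1, -1, 0, 0], [0, 0, 0, 1, -1, 0], [0, -1, -1, -1, 2, 1]]),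
([10, 11, 22, 23, 29], [[1, -1, -1, 1, 0, 0]]),
([10, 15, 16, 17, 22], [[0, 0, 0, 1, 1, -1], [1, 0, -1, 0, 0, 0], [0, 0, 1, 0, -1, 0], [0, 1, -1, 0, 0, 0], [-1, -2, 2, -1, 1, 1]]),
([10, 15, 16, 17, 23], [[0, 0, 1, 0, 1, -1], [1, 0, -1, 0, 0, 0], [0, 0, 0, 1, -1, 0], [0, 1, -1, 0, 0, 0], [-1, -2, 3, -2, 1, 1]]),
([10, 15, 16, 17, 29], [[0, 1, 0, 0, 1, -1], [1, 0, -1, 0, 0, 0], [0, -1, 1, 1, -1, 0], [0, 1, -1, 0, 0, 0], [-1, -1, 2, -2, 1, 1]]),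
([10, 15, 16, 22, 23], [[0, 0, 1, 0, 1, -1], [1, 0, -1, 0, 0, 0], [0, 0, 1, -1, 0, 0], [0, 1, -1, 0, 0, 0], [-1, -2, 1, 2, -1, 1]]),
([10, 15, 16, 22, 29], [[0, 1, 0, 0, 1, -1], [1, 0, -1, 0, 0, 0], [0, 0, 1, -1, 0, 0], [0, 1, -1, 0, 0, 0], [-1, -3, 2, 2, -1, 1]]),
([10, 15, 16, 23, 29], [[0, 1, -1, -1, 1, 0]]),
([10, 15, 17, 22, 23], [[0, 0, 1, 1, 0, -1], [1, 0, -1, -1, 1, 0], [0, 0, 1, 0, -1, 0], [0, 1, -1, -1, 1, 0], [-1, -2, 1, 3, -2, 1]]),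
([10, 15, 17, 22, 29], [[0, 1, -1, -1, 1, 0]]),
([10, 15, 17, 23, 29], [[0, 1, 0, 0, 1, -1], [1, -1, 0, 1, -1, 0], [0, 0, 1, -1, 0, 0], [0, 0, 0, 1, -1, 0], [-1, 1, -2, -2, 3, 1]]),
([10, 15, 22, 23, 29], [[0, 1, 0, 0, 1, -1], [1, -1, 0, 1, -1, 0], [0, 1, -1, -1, 1, 0], [0, 0, 0, 1, -1, 0], [-1, -1, 2, -2, 1, 1]]),
([10, 16, 17, 22, 23], [[0, 1, -1, -1, 1, 0]]),
([10, 16, 17, 22, 29], [[0, 0, 1, 1, 0, -1], [1, -1, 0, 0, 0, 0], [0, 1, 0, -1, 0, 0], [0, -1, 1, 1, -1, 0], [-1, 2, -3, -1, 2, 1]]),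
([10, 16, 17, 23, 29], [[0, 1, 0, 1, 0, -1], [1, -1, 0, 0, 0, 0], [0, 0, 1, -1, 0, 0], [0, 0, 0, 1, -1, 0], [-1, 1, -2, -1, 2, 1]]),
([10, 16, 22, 23, 29], [[0, 1, 0, 1, 0, -1], [1, -1, 0, 0, 0, 0], [0, 1, -1, 0, 0, 0], [0, 0, 0, 1, -1, 0], [-1, -1, 2, -3, 2, 1]]),
([10, 17, 22, 23, 29], [[0, 1, 1, 0, 0, -1], [1, -1, -1, 1, 0, 0], [0, 1, 0, -1, 0, 0], [0, 0, 0, 1, -1, 0], [-1, -1, 1, -2, 2, 1]])]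

def table11 : List (List Nat × List (List Int)) := [
([11, 15, 16, 17, 22], [[0, 0, 0, 1, 1, -1], [1, 0, 0, -1, 0, 0], [0, 0, 1, 0, -1, 0], [0, 1, -1, 0, 0, 0], [-1, -2, 1, 0, 1, 1]]),
([11, 15, 16, 17, 23], [[0, 0, 1, 0, 1, -1], [1, 0, 0, -1, 0, 0], [0, 0, 0, 1, -1, 0], [0, 1, -1, 0, 0, 0], [-1, -2, 2, -1, 1, 1]]),
([11, 15, 16, 17, 29], [[0, 1, 0, 0, 1, -1], [1, 0, 0, -1, 0, 0], [0, -1, 1, 1, -1, 0], [0, 1, -1, 0, 0, 0], [-1, -1, 1, -1, 1, 1]]),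
([11, 15, 16, 22, 23], [[0, 0, 1, 0, 1, -1], [1, 0, -1, 1, -1, 0], [0, 0, 1, -1, 0, 0], [0, 1, -1, 0, 0, 0], [-1, -2, 1, 1, 0, 1]]),
([11, 15, 16, 22, 29], [[0, 1, 0, 0, 1, -1], [1, -1, 0, 1, -1, 0], [0, 0, 1, -1, 0, 0], [0, 1, -1, 0, 0, 0], [-1, -2, 1, 1, 0, 1]]),
([11, 15, 16, 23, 29], [[0, 1, -1, -1, 1, 0]]),
([11, 15, 17, 22, 23], [[0, 0, 1, 1, 0, -1], [1, 0, -1, 0, 0, 0], [0, 0, 1, 0, -1, 0], [0, 1, -1, -1, 1, 0], [-1, -2, 1, 2, -1, 1]]),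
([11, 15, 17, 22, 29], [[0, 1, -1, -1, 1, 0]]),
([11, 15, 17, 23, 29], [[0, 1, 0, 0, 1, -1], [1, 0, -1, 0, 0, 0], [0, 0, 1, -1, 0, 0], [0, 0, 0, 1, -1, 0], [-1, 0, -1, -1, 2, 1]]),
([11, 15, 22, 23, 29], [[0, 1, 0, 0, 1, -1], [1, -1, 1, 0, -1, 0], [0, 1, -1, -1, 1, 0], [0, 0, 0, 1, -1, 0], [-1, -1, 1, -1, 1, 1]]),
([11, 16, 17, 22, 23], [[0, 1, -1, -1, 1, 0]]),
([11, 16, 17, 22, 29], [[0, 0, 1, 1, 0, -1], [1, 0, -1, 0, 0, 0], [0, 1, 0, -1, 0, 0], [0, -1, 1, 1, -1, 0], [-1, 1, -2, -1, 2, 1]]),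
([11, 16, 17, 23, 29], [[0, 1, 0, 1, 0, -1], [1, 0, -1, 0, 0, 0], [0, 0, 1, -1, 0, 0], [0, 0, 0, 1, -1, 0], [-1, 0, -1, -1, 2, 1]]),
([11, 16, 22, 23, 29], [[0, 1, 0, 1, 0, -1], [1, -1, 1, -1, 0, 0], [0, 1, -1, 0, 0, 0], [0, 0, 0, 1, -1, 0], [-1, -1, 1, -2, 2, 1]]),
([11, 17, 22, 23, 29], [[0, 1, 1, 0, 0, -1], [1, -1, 0, 0, 0, 0], [0, 1, 0, -1, 0, 0], [0, 0, 0, 1, -1, 0], [-1, -1, 0, -1, 2, 1]]),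
([15, 16, 17, 22, 23], [[0, 1, -1, -1, 1, 0]]),
([15, 16, 17, 22, 29], [[1, 0, -1, -1, 1, 0]]),
([15, 16, 17, 23, 29], [[1, -1, 0, -1, 1, 0]]),
([15, 16, 22, 23, 29], [[1, -1, 0, -1, 1, 0]]),
([15, 17, 22, 23, 29], [[1, -1, -1, 0, 1, 0]]),
([16, 17, 22, 23, 29], [[1, -1, -1, 1, 0, 0]])]

def table : List (List Nat × List (List Int)) :=
  table0 ++ table1 ++ table2 ++ table3 ++ table4 ++ table5 ++ table6 ++ table7 ++ table8 ++ table9 ++ table10 ++ table11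
set_option maxRecDepth 40000 in
theorem key : table.all (fun p => check p.1 p.2) = true := by decide

set_option maxRecDepth 40000 in
theorem complete :
    (T10.sublistsLen 5).all (fun l => decide (l ∈ table.map Prod.fst)) = true := by decide

theorem T10sorted : T10.Pairwise (· ≤ ·) := by decide

lemma sum_e : ∑ i, e i = 0 := by
  funext j
  show (∑ i, e i) j = _
  rw [Finset.sum_apply]
  simp [e, Finset.sum_sub_distrib, Finset.sum_ite_eq]

lemma Phi_add (a b : Fin 6 → ℤ) : Phi (a + b) = Phi a + Phi b := by
  simp [Phi, add_smul, Finset.sum_add_distrib]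

lemma Phi_smul (q : ℤ) (a : Fin 6 → ℤ) : Phi (q • a) = (q : ℚ) • Phi a := by
  simp [Phi, Finset.smul_sum, mul_smul]

lemma Phi_zero : Phi 0 = 0 := by simp [Phi]

lemma Phi_ones : Phi ones = 0 := by simp [Phi, ones, sum_e]

lemma Phi_ite (i j k : Fin 6) :
    Phi (fun m => (if m = i then 1 else 0) + (if m = j then 1 else 0) + (if m = k then 1 else 0))
      = e i + e j + e k := by
  simp [Phi, add_smul, Finset.sum_add_distrib, Finset.sum_ite_eq', ite_smul]

lemma col_eq (i j k : Fin 6) (hij : i < j) (hjk : j < k) :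
    col (36 * (i : ℕ) + 6 * (j : ℕ) + (k : ℕ)) =
      fun m => (if m = i then 1 else 0) + (if m = j then 1 else 0) + (if m = k then 1 else 0) := by
  have hj := j.isLt; have hk := k.isLt
  have h1 : (36 * (i : ℕ) + 6 * (j : ℕ) + (k : ℕ)) / 36 = (i : ℕ) := by omega
  have h2 : (36 * (i : ℕ) + 6 * (j : ℕ) + (k : ℕ)) / 6 % 6 = (j : ℕ) := by omega
  have h3 : (36 * (i : ℕ) + 6 * (j : ℕ) + (k : ℕ)) % 6 = (k : ℕ) := by omega
  have hij' : i ≠ j := hij.ne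
  have hjk' : j ≠ k := hjk.ne
  have hik' : i ≠ k := (hij.trans hjk).ne
  funext m
  simp only [col, h1, h2, h3, ← Fin.val_eq_val]
  by_cases e1 : m = i <;> by_cases e2 : m = j <;> by_cases e3 : m = k <;> simp_all [Fin.val_eq_val]

lemma Phi_col (i j k : Fin 6) (hij : i < j) (hjk : j < k) :
    Phi (col (36 * (i : ℕ) + 6 * (j : ℕ) + (k : ℕ))) = e i + e j + e k := by
  rw [col_eq i j k hij hjk, Phi_ite]

lemma col_sum (i j k : Fin 6) (hij : i < j) (hjk : j < k) :
    ∑ m, col (36 * (i : ℕ) + 6 * (j : ℕ) + (k : ℕ)) m = 3 := by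
  rw [col_eq i j k hij hjk]
  have hij' : i ≠ j := hij.ne
  have hjk' : j ≠ k := hjk.ne
  have hik' : i ≠ k := (hij.trans hjk).ne
  simp [Finset.sum_add_distrib, Finset.sum_ite_eq']

lemma compl_ex : ∀ i j k : Fin 6, 0 < i → i < j → j < k →
    ∃ b c : Fin 6, 0 < b ∧ b < c ∧
      (0:Fin 6) ≠ b ∧ (0:Fin 6) ≠ c ∧ (0:Fin 6) ≠ i ∧ (0:Fin 6) ≠ j ∧ (0:Fin 6) ≠ k ∧
      b ≠ c ∧ b ≠ i ∧ b ≠ j ∧ b ≠ k ∧ c ≠ i ∧ c ≠ j ∧ c ≠ k ∧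
      ({0, b, c, i, j, k} : Finset (Fin 6)) = Finset.univ := by decide

lemma six_sum (b c i j k : Fin 6)
    (h1 : (0:Fin 6) ≠ b) (h2 : (0:Fin 6) ≠ c) (h3 : (0:Fin 6) ≠ i) (h4 : (0:Fin 6) ≠ j)
    (h5 : (0:Fin 6) ≠ k) (h6 : b ≠ c) (h7 : b ≠ i) (h8 : b ≠ j) (h9 : b ≠ k)
    (h10 : c ≠ i) (h11 : c ≠ j) (h12 : c ≠ k) (h13 : i ≠ j) (h14 : i ≠ k) (h15 : j ≠ k)
    (huniv : ({0, b, c, i, j, k} : Finset (Fin 6)) = Finset.univ) :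
    e 0 + e b + e c + e i + e j + e k = 0 := by
  have : ∑ m ∈ ({0, b, c, i, j, k} : Finset (Fin 6)), e m
      = e 0 + e b + e c + e i + e j + e k := by
    rw [Finset.sum_insert (by simp [h1, h2, h3, h4, h5]),
        Finset.sum_insert (by simp [h6, h7, h8, h9]),
        Finset.sum_insert (by simp [h10, h11, h12]),
        Finset.sum_insert (by simp [h13, h14]),
        Finset.sum_insert (by simp [h15]), Finset.sum_singleton]
    abel
  rw [← this, huniv, sum_e]

lemma normalize (i j k : Fin 6) (hij : i < j) (hjk : j < k) :
    ∃ (s : ℚ) (b c : Fin 6), (s = 1 ∨ s = -1) ∧ 0 < b ∧ b < c ∧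
      e 0 + e b + e c = s • (e i + e j + e k) := by
  by_cases hi : i = 0
  · exact ⟨1, j, k, Or.inl rfl, hi ▸ hij, hjk, by rw [hi, one_smul]⟩
  · obtain ⟨b, c, hb, hbc, h1, h2, h3, h4, h5, h6, h7, h8, h9, h10, h11, h12, huniv⟩ :=
      compl_ex i j k (Fin.pos_of_ne_zero hi) hij hjk
    refine ⟨-1, b, c, Or.inr rfl, hb, hbc, ?_⟩
    have h0 := six_sum b c i j k h1 h2 h3 h4 h5 h6 h7 h8 h9 h10 h11 h12
      hij.ne (hij.trans hjk).ne hjk.ne huniv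
    funext m
    have h0' := congrFun h0 m
    simp only [Pi.add_apply, Pi.smul_apply, Pi.zero_apply, smul_eq_mul] at h0' ⊢
    linarith

lemma memT10 : ∀ b c : Fin 6, 0 < b → b < c → (6 * (b : ℕ) + (c : ℕ)) ∈ T10 := by decide

end ZspanAux


namespace ZspanAux

lemma sum_ite_smul (v : Fin 5 → (Fin 6 → ℚ)) (l : Fin 5) (t : ℚ) :
    ∑ r, (if r = l then t else 0) • v r = t • v l := by
  simp [ite_smul, Finset.sum_ite_eq']

lemma Phi_gens :
    Phi (fun m => if m = 0 then 1 else if m = 1 then -1 else 0) = e 0 - e 1 ∧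
    Phi (fun m => if m = 1 then 1 else if m = 2 then -1 else 0) = e 1 - e 2 ∧
    Phi (fun m => if m = 2 then 1 else if m = 3 then -1 else 0) = e 2 - e 3 ∧
    Phi (fun m => if m = 3 then 1 else if m = 4 then -1 else 0) = e 3 - e 4 ∧
    Phi (fun m => if m = 4 then 3 else 0) = (3 : ℚ) • e 4 := by
  refine ⟨?_, ?_, ?_, ?_, ?_⟩ <;> simp [Phi, Fin.sum_univ_six] <;> abel

lemma decomp (a : Fin 6 → ℤ) (mm : ℤ) (hmm : ∑ m, a m = 3 * mm) :
    Phi a = ((a 0 - a 5 : ℤ) : ℚ) • (e 0 - e 1)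
          + ((a 0 + a 1 - 2 * a 5 : ℤ) : ℚ) • (e 1 - e 2)
          + ((a 0 + a 1 + a 2 - 3 * a 5 : ℤ) : ℚ) • (e 2 - e 3)
          + ((a 0 + a 1 + a 2 + a 3 - 4 * a 5 : ℤ) : ℚ) • (e 3 - e 4)
          + ((mm - 2 * a 5 : ℤ) : ℚ) • ((3 : ℚ) • e 4) := by
  have hmm' : (a 0 : ℚ) + a 1 + a 2 + a 3 + a 4 + a 5 = 3 * mm := by
    have := hmm
    rw [Fin.sum_univ_six] at this
    exact_mod_cast congrArg (Int.cast : ℤ → ℚ) this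
  funext m
  have he : ∀ i : Fin 6, ∀ x : ℚ, x • e i = fun j => x * ((if j = i then 1 else 0) - 1/6) :=
    fun i x => rfl
  simp only [Phi, Fin.sum_univ_six, Pi.add_apply, Pi.sub_apply, Pi.smul_apply, smul_eq_mul, e]
  push_cast
  fin_cases m <;> simp <;> linarith

end ZspanAux

namespace ZspanAux

lemma Phi_combo6 (q0 q1 q2 q3 q4 q5 : ℤ) (u0 u1 u2 u3 u4 u5 : Fin 6 → ℤ) :
    Phi (combo [q0, q1, q2, q3, q4, q5] [u0, u1, u2, u3, u4, u5])
      = (q0 : ℚ) • Phi u0 + (q1 : ℚ) • Phi u1 + (q2 : ℚ) • Phi u2 + (q3 : ℚ) • Phi u3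
        + (q4 : ℚ) • Phi u4 + (q5 : ℚ) • Phi u5 := by
  simp only [combo, Phi_add, Phi_smul, Phi_zero]
  abel

lemma smul_mem_int (W : Submodule ℤ (Fin 6 → ℚ)) (q : ℤ) {y : Fin 6 → ℚ} (hy : y ∈ W) :
    (q : ℚ) • y ∈ W := by
  rw [Int.cast_smul_eq_zsmul]
  exact W.smul_mem _ hy

lemma list_len6 {α : Type*} (c : List α) (h : c.length = 6) :
    ∃ q0 q1 q2 q3 q4 q5 : α, c = [q0, q1, q2, q3, q4, q5] := by
  rcases c with _ | ⟨q0, _ | ⟨q1, _ | ⟨q2, _ | ⟨q3, _ | ⟨q4, _ | ⟨q5, _ | ⟨q6, t⟩⟩⟩⟩⟩⟩⟩ <;>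
    simp_all

lemma list_len5 {α : Type*} (c : List α) (h : c.length = 5) :
    ∃ q0 q1 q2 q3 q4 : α, c = [q0, q1, q2, q3, q4] := by
  rcases c with _ | ⟨q0, _ | ⟨q1, _ | ⟨q2, _ | ⟨q3, _ | ⟨q4, _ | ⟨q5, t⟩⟩⟩⟩⟩⟩ <;> simp_all

end ZspanAux

open ZspanAux

/-- For any 5 linearly independent vectors `v₁, ..., v₅` from
`M = {eᵢ + eⱼ + e_k : 1 ≤ i < j < k ≤ 6}`, the subgroup `ℤ(v₁,...,v₅)` equals
`{∑ xᵢeᵢ : xᵢ ∈ ℤ, ∑ xᵢ ≡ 0 (mod 3)}`. -/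
theorem zspan_eq_mod3_lattice (v : Fin 5 → (Fin 6 → ℚ))
    (hv : ∀ l, ∃ i j k : Fin 6, i < j ∧ j < k ∧ v l = e i + e j + e k)
    (hind : LinearIndependent ℚ v) :
    ∀ x : Fin 6 → ℚ,
      (∃ c : Fin 5 → ℤ, x = ∑ l, (c l : ℚ) • v l) ↔
      (∃ a : Fin 6 → ℤ, (3 : ℤ) ∣ ∑ i, a i ∧ x = ∑ i, (a i : ℚ) • e i) := by
  choose i j k hij hjk hvl using hv
  set u : Fin 5 → (Fin 6 → ℤ) :=
    fun l => col (36 * (i l : ℕ) + 6 * (j l : ℕ) + (k l : ℕ)) with hu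
  have hPhiu : ∀ l, Phi (u l) = v l := fun l => by
    rw [hu, hvl l]; exact Phi_col _ _ _ (hij l) (hjk l)
  intro x
  constructor
  · rintro ⟨c, rfl⟩
    refine ⟨fun m => ∑ l, c l * u l m, ⟨∑ l, c l, ?_⟩, ?_⟩
    · rw [Finset.sum_comm]
      rw [Finset.mul_sum]
      refine Finset.sum_congr rfl fun l _ => ?_
      rw [← Finset.mul_sum, hu, col_sum _ _ _ (hij l) (hjk l), mul_comm]
    · calc ∑ l, (c l : ℚ) • v l
          = ∑ l, ∑ m, ((c l * u l m : ℤ) : ℚ) • e m := by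
            refine Finset.sum_congr rfl fun l _ => ?_
            rw [← hPhiu l, Phi, Finset.smul_sum]
            refine Finset.sum_congr rfl fun m _ => ?_
            push_cast
            rw [smul_smul]
        _ = ∑ m, ((∑ l, c l * u l m : ℤ) : ℚ) • e m := by
            rw [Finset.sum_comm]
            refine Finset.sum_congr rfl fun m _ => ?_
            rw [← Finset.sum_smul]
            push_cast
            rfl
  · rintro ⟨a, ⟨mm, hmm⟩, rfl⟩
    have hnorm : ∀ l, ∃ (s : ℚ) (b c : Fin 6), (s = 1 ∨ s = -1) ∧ 0 < b ∧ b < c ∧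
        e 0 + e b + e c = s • v l := fun l => by
      obtain ⟨s, b, c, hs, hb, hbc, hsum⟩ := normalize (i l) (j l) (k l) (hij l) (hjk l)
      exact ⟨s, b, c, hs, hb, hbc, by rw [hvl l]; exact hsum⟩
    choose σ b c hσ hb0 hbc hwv using hnorm
    have hσ0 : ∀ l, σ l ≠ 0 := fun l => by rcases hσ l with h | h <;> rw [h] <;> norm_num
    set enc : Fin 5 → ℕ := fun l => 6 * (b l : ℕ) + (c l : ℕ) with henc
    have hmcol : ∀ l, Phi (col (enc l)) = e 0 + e (b l) + e (c l) := fun l => by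
      have h36 : enc l = 36 * ((0 : Fin 6) : ℕ) + 6 * (b l : ℕ) + (c l : ℕ) := by
        simp [henc]
      rw [h36, Phi_col 0 (b l) (c l) (hb0 l) (hbc l)]
    have hdep : ∀ l l', l ≠ l' → σ l • v l = σ l' • v l' → False := by
      intro l l' hne hEq
      have hsum : ∑ r, ((if r = l then σ l else 0) + (if r = l' then -σ l' else 0)) • v r = 0 := by
        simp only [add_smul, Finset.sum_add_distrib, sum_ite_smul]
        rw [hEq]
        simp
      have hz := Fintype.linearIndependent_iff.mp hind _ hsum l
      simp only [if_pos rfl, if_neg hne, add_zero] at hz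
      exact hσ0 l hz
    have hmdec : ∀ l l', enc l = enc l' → b l = b l' ∧ c l = c l' := by
      intro l l' h
      have h' : 6 * (b l : ℕ) + (c l : ℕ) = 6 * (b l' : ℕ) + (c l' : ℕ) := h
      have h1 := (c l).isLt; have h2 := (c l').isLt
      exact ⟨Fin.ext (by omega), Fin.ext (by omega)⟩
    have hminj : Function.Injective enc := by
      intro l l' h
      by_contra hne
      obtain ⟨hbe, hce⟩ := hmdec l l' h
      refine hdep l l' hne ?_
      rw [← hwv l, ← hwv l', hbe, hce]
    set W : Submodule ℤ (Fin 6 → ℚ) := Submodule.span ℤ (Set.range v) with hW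
    have hwW : ∀ l, e 0 + e (b l) + e (c l) ∈ W := by
      intro l
      have hv' : v l ∈ W := Submodule.subset_span ⟨l, rfl⟩
      rw [hwv l]
      rcases hσ l with h | h <;> rw [h]
      · simpa using hv'
      · simpa using W.neg_mem hv'
    set s : Finset ℕ := Finset.image enc Finset.univ with hs
    have hcard : s.card = 5 := by
      rw [hs, Finset.card_image_of_injective _ hminj, Finset.card_univ, Fintype.card_fin]
    set L : List ℕ := s.sort (· ≤ ·) with hLdef
    have hlen : L.length = 5 := by rw [hLdef, Finset.length_sort, hcard]
    have hcolw : ∀ y ∈ L, ∃ l, enc l = y := by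
      intro y hy
      rw [hLdef, Finset.mem_sort] at hy
      obtain ⟨l, _, hl⟩ := Finset.mem_image.mp (hs ▸ hy)
      exact ⟨l, hl⟩
    have hmemT10 : ∀ y ∈ L, y ∈ T10 := by
      intro y hy
      obtain ⟨l, rfl⟩ := hcolw y hy
      exact memT10 (b l) (c l) (hb0 l) (hbc l)
    have hnd : L.Nodup := Finset.sort_nodup _ _
    have hsubl : L.Sublist T10 :=
      List.sublist_of_subperm_of_pairwise (List.subperm_of_subset hnd hmemT10)
        (Finset.pairwise_sort _ _) T10sorted
    have hLmem : L ∈ T10.sublistsLen 5 := List.mem_sublistsLen.mpr ⟨hsubl, hlen⟩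
    have hmemmap : L ∈ table.map Prod.fst :=
      of_decide_eq_true (List.all_eq_true.mp complete L hLmem)
    obtain ⟨⟨L', cert⟩, hpair, hfst⟩ := List.mem_map.mp hmemmap
    simp only at hfst
    subst hfst
    have hchk : check L cert = true := List.all_eq_true.mp key _ hpair
    obtain ⟨n0, n1, n2, n3, n4, hL5⟩ := list_len5 L hlen
    rw [hL5] at hchk hnd hcolw
    have hnW : ∀ y ∈ [n0, n1, n2, n3, n4], Phi (col y) ∈ W := by
      intro y hy
      obtain ⟨l, rfl⟩ := hcolw y hy
      rw [hmcol l]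
      exact hwW l
    rcases cert with _ | ⟨c0, _ | ⟨c1, _ | ⟨c2, _ | ⟨c3, _ | ⟨c4, _ | ⟨c5, rest⟩⟩⟩⟩⟩⟩
    · simp [check] at hchk
    · -- kernel certificate: contradiction with linear independence
      simp only [check, Bool.and_eq_true, decide_eq_true_eq, Bool.not_eq_true',
        decide_eq_false_iff_not] at hchk
      obtain ⟨⟨hlen6, hcomb⟩, htake⟩ := hchk
      obtain ⟨q0, q1, q2, q3, q4, q5, rfl⟩ := list_len6 c0 hlen6
      have hcomb' : combo [q0, q1, q2, q3, q4, q5]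
          [col n0, col n1, col n2, col n3, col n4, ones] = 0 := by
        simpa using hcomb
      have hPhiEq := congrArg Phi hcomb'
      rw [Phi_combo6, Phi_zero, Phi_ones, smul_zero, add_zero] at hPhiEq
      obtain ⟨l0, hl0⟩ := hcolw n0 (by simp)
      obtain ⟨l1, hl1⟩ := hcolw n1 (by simp)
      obtain ⟨l2, hl2⟩ := hcolw n2 (by simp)
      obtain ⟨l3, hl3⟩ := hcolw n3 (by simp)
      obtain ⟨l4, hl4⟩ := hcolw n4 (by simp)
      simp only [List.nodup_cons, List.mem_cons, List.mem_singleton, List.not_mem_nil,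
        or_false, not_or, List.nodup_nil, and_true] at hnd
      have ne01 : l0 ≠ l1 := fun h => hnd.1.1 (by rw [← hl0, ← hl1, h])
      have ne02 : l0 ≠ l2 := fun h => hnd.1.2.1 (by rw [← hl0, ← hl2, h])
      have ne03 : l0 ≠ l3 := fun h => hnd.1.2.2.1 (by rw [← hl0, ← hl3, h])
      have ne04 : l0 ≠ l4 := fun h => hnd.1.2.2.2 (by rw [← hl0, ← hl4, h])
      have ne12 : l1 ≠ l2 := fun h => hnd.2.1.1 (by rw [← hl1, ← hl2, h])
      have ne13 : l1 ≠ l3 := fun h => hnd.2.1.2.1 (by rw [← hl1, ← hl3, h])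
      have ne14 : l1 ≠ l4 := fun h => hnd.2.1.2.2 (by rw [← hl1, ← hl4, h])
      have ne23 : l2 ≠ l3 := fun h => hnd.2.2.1.1 (by rw [← hl2, ← hl3, h])
      have ne24 : l2 ≠ l4 := fun h => hnd.2.2.1.2 (by rw [← hl2, ← hl4, h])
      have ne34 : l3 ≠ l4 := fun h => hnd.2.2.2.1 (by rw [← hl3, ← hl4, h])
      have hterm : ∀ (q : ℤ) l, ((q : ℚ) * σ l) • v l = (q : ℚ) • (e 0 + e (b l) + e (c l)) :=
        fun q l => by rw [mul_smul, hwv l]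
      have hgsum : ∑ r, ((if r = l0 then (q0 : ℚ) * σ l0 else 0)
          + (if r = l1 then (q1 : ℚ) * σ l1 else 0)
          + (if r = l2 then (q2 : ℚ) * σ l2 else 0)
          + (if r = l3 then (q3 : ℚ) * σ l3 else 0)
          + (if r = l4 then (q4 : ℚ) * σ l4 else 0)) • v r = 0 := by
        simp only [add_smul, Finset.sum_add_distrib, sum_ite_smul]
        rw [hterm, hterm, hterm, hterm, hterm,
          ← hmcol l0, ← hmcol l1, ← hmcol l2, ← hmcol l3, ← hmcol l4,
          hl0, hl1, hl2, hl3, hl4]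
        exact hPhiEq
      have hz := Fintype.linearIndependent_iff.mp hind _ hgsum
      have hq : ∀ p : Fin 5, True := fun _ => trivial
      have hz0 := hz l0
      have hz1 := hz l1
      have hz2 := hz l2
      have hz3 := hz l3
      have hz4 := hz l4
      simp only [if_pos rfl, if_neg ne01, if_neg ne02, if_neg ne03, if_neg ne04,
        if_neg ne12, if_neg ne13, if_neg ne14, if_neg ne23, if_neg ne24, if_neg ne34,
        if_neg (Ne.symm ne01), if_neg (Ne.symm ne02), if_neg (Ne.symm ne03),
        if_neg (Ne.symm ne04), if_neg (Ne.symm ne12), if_neg (Ne.symm ne13),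
        if_neg (Ne.symm ne14), if_neg (Ne.symm ne23), if_neg (Ne.symm ne24),
        if_neg (Ne.symm ne34), if_true, add_zero, zero_add] at hz0 hz1 hz2 hz3 hz4
      have hq0 : q0 = 0 := by
        rcases mul_eq_zero.mp (by linarith [hz0] : (q0 : ℚ) * σ l0 = 0) with h | h
        · exact_mod_cast h
        · exact absurd h (hσ0 l0)
      have hq1 : q1 = 0 := by
        rcases mul_eq_zero.mp (by linarith [hz1] : (q1 : ℚ) * σ l1 = 0) with h | h
        · exact_mod_cast h
        · exact absurd h (hσ0 l1)
      have hq2 : q2 = 0 := by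
        rcases mul_eq_zero.mp (by linarith [hz2] : (q2 : ℚ) * σ l2 = 0) with h | h
        · exact_mod_cast h
        · exact absurd h (hσ0 l2)
      have hq3 : q3 = 0 := by
        rcases mul_eq_zero.mp (by linarith [hz3] : (q3 : ℚ) * σ l3 = 0) with h | h
        · exact_mod_cast h
        · exact absurd h (hσ0 l3)
      have hq4 : q4 = 0 := by
        rcases mul_eq_zero.mp (by linarith [hz4] : (q4 : ℚ) * σ l4 = 0) with h | h
        · exact_mod_cast h
        · exact absurd h (hσ0 l4)
      exact absurd (by rw [hq0, hq1, hq2, hq3, hq4]; rfl) htake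
    · simp [check] at hchk
    · simp [check] at hchk
    · simp [check] at hchk
    · -- spanning certificate
      have hmemW : ∀ (cr : List ℤ) (g : Fin 6 → ℤ), cr.length = 6 →
          combo cr [col n0, col n1, col n2, col n3, col n4, ones] = g → Phi g ∈ W := by
        intro cr g hlen6 hcomb
        obtain ⟨q0, q1, q2, q3, q4, q5, rfl⟩ := list_len6 cr hlen6
        have hPhiEq := congrArg Phi hcomb
        rw [Phi_combo6, Phi_ones, smul_zero, add_zero] at hPhiEq
        rw [← hPhiEq]
        refine W.add_mem (W.add_mem (W.add_mem (W.add_mem ?_ ?_) ?_) ?_) ?_ <;>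
          exact smul_mem_int W _ (hnW _ (by simp))
      simp only [check, gens, List.zip, List.zipWith, List.all_cons, List.all_nil,
        Bool.and_eq_true, decide_eq_true_eq, and_true] at hchk
      obtain ⟨⟨hl0, hc0⟩, ⟨hl1, hc1⟩, ⟨hl2, hc2⟩, ⟨hl3, hc3⟩, ⟨hl4, hc4⟩⟩ := hchk
      have hg0 : e 0 - e 1 ∈ W := by
        rw [← Phi_gens.1]; exact hmemW c0 _ hl0 (by simpa using hc0)
      have hg1 : e 1 - e 2 ∈ W := by
        rw [← Phi_gens.2.1]; exact hmemW c1 _ hl1 (by simpa using hc1)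
      have hg2 : e 2 - e 3 ∈ W := by
        rw [← Phi_gens.2.2.1]; exact hmemW c2 _ hl2 (by simpa using hc2)
      have hg3 : e 3 - e 4 ∈ W := by
        rw [← Phi_gens.2.2.2.1]; exact hmemW c3 _ hl3 (by simpa using hc3)
      have hg4 : (3 : ℚ) • e 4 ∈ W := by
        rw [← Phi_gens.2.2.2.2]; exact hmemW c4 _ hl4 (by simpa using hc4)
      have hxW : (∑ m, (a m : ℚ) • e m) ∈ W := by
        have hPa : (∑ m, (a m : ℚ) • e m) = Phi a := rfl
        rw [hPa, decomp a mm hmm]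
        refine W.add_mem (W.add_mem (W.add_mem (W.add_mem ?_ ?_) ?_) ?_) ?_
        · exact smul_mem_int W _ hg0
        · exact smul_mem_int W _ hg1
        · exact smul_mem_int W _ hg2
        · exact smul_mem_int W _ hg3
        · exact smul_mem_int W _ hg4
      obtain ⟨cc, hcc⟩ := (Submodule.mem_span_range_iff_exists_fun ℤ).mp (hW ▸ hxW)
      refine ⟨cc, ?_⟩
      rw [← hcc]
      exact Finset.sum_congr rfl fun l _ => (Int.cast_smul_eq_zsmul ℚ _ _).symm
    · simp [check] at hchk
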